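/- For any simple graph G on vertex set {1,…,n}, cc(G) equals the least k ∈ ℕ for which there exist pairwise commuting nonzero orthogonal projections P_1,…,P_n ∈ M_k (i.e., P_i = P_iᴴ = P_i², P_i ≠ 0, and P_iP_j = P_jP_i for all i,j) such that for all distinct i,j: i and j are adjacent in G if and only if P_iP_j ≠ 0. -/

import Mathlib

open Matrix
open scoped ComplexOrder

/-- Graph parameter `cc(G)`: the least `k` for which `G` is the non-orthogonality graph
of a tuple of nonzero entrywise-nonnegative vectors in `ℝ^k`. -/
noncomputable def ccG {n : ℕ} (G : SimpleGraph (Fin n)) : ℕ :=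
  sInf {k | ∃ x : Fin n → Fin k → ℝ, (∀ i, x i ≠ 0) ∧ (∀ i r, 0 ≤ x i r) ∧
    ∀ i j, i ≠ j → (G.Adj i j ↔ ∑ r, x i r * x j r ≠ 0)}


lemma trace_re_of_proj {k : ℕ} (A : Matrix (Fin k) (Fin k) ℂ) (hA : A.IsHermitian)
    (hidem : A * A = A) :
    0 ≤ A.trace.re ∧ (A ≠ 0 → 1 ≤ A.trace.re) := by
  classical
  set U : Matrix (Fin k) (Fin k) ℂ := (hA.eigenvectorUnitary : Matrix (Fin k) (Fin k) ℂ) with hU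
  have hmem : U ∈ Matrix.unitaryGroup (Fin k) ℂ := hA.eigenvectorUnitary.2
  have hU1 : star U * U = 1 := (Matrix.mem_unitaryGroup_iff').mp hmem
  have hU2 : U * star U = 1 := (Matrix.mem_unitaryGroup_iff).mp hmem
  set μ := hA.eigenvalues with hμ
  set D : Matrix (Fin k) (Fin k) ℂ := diagonal (RCLike.ofReal ∘ μ) with hD
  have hdiag : star U * A * U = D := by
    have h := hA.conjStarAlgAut_star_eigenvectorUnitary
    rw [Unitary.conjStarAlgAut_apply, Unitary.coe_star, star_star] at h
    exact h
  have hspec : A = U * D * star U := by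
    rw [← hdiag]
    calc A = (U * star U) * A * (U * star U) := by rw [hU2]; noncomm_ring
    _ = U * (star U * A * U) * star U := by noncomm_ring
  have hDD : D * D = D := by
    rw [← hdiag]
    calc (star U * A * U) * (star U * A * U) = star U * (A * (U * star U) * A) * U := by
          noncomm_ring
    _ = star U * A * U := by rw [hU2, mul_one, hidem]
  rw [hD, diagonal_mul_diagonal] at hDD
  have hμ01 : ∀ i, μ i = 0 ∨ μ i = 1 := by
    intro i
    have h := congrFun (diagonal_injective hDD) i
    simp only [Pi.mul_apply, Function.comp_apply] at h
    have h' : μ i * μ i = μ i := by exact_mod_cast h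
    have h2 : μ i * (μ i - 1) = 0 := by linear_combination h'
    rcases mul_eq_zero.mp h2 with h3 | h3
    · exact Or.inl h3
    · exact Or.inr (by linarith)
  have htr : A.trace.re = ∑ i, μ i := by
    rw [hspec, trace_mul_cycle, hU1, one_mul, hD, trace_diagonal]
    simp [Complex.ofReal_re]
  have hnn : ∀ i, (0:ℝ) ≤ μ i := by
    intro i; rcases hμ01 i with h | h <;> simp [h]
  constructor
  · rw [htr]; exact Finset.sum_nonneg fun i _ => hnn i
  · intro hA0
    have : ∃ i, μ i = 1 := by
      by_contra hc
      push_neg at hc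
      have hz : ∀ i, μ i = 0 := fun i => (hμ01 i).resolve_right (hc i)
      apply hA0
      rw [hspec, hD]
      have : (RCLike.ofReal ∘ μ : Fin k → ℂ) = 0 := by
        funext i; simp [hz i]
      rw [this]
      rw [show (diagonal (0 : Fin k → ℂ)) = 0 from diagonal_zero]
      rw [mul_zero, zero_mul]
    obtain ⟨i, hi⟩ := this
    rw [htr]
    calc (1:ℝ) = μ i := hi.symm
    _ ≤ ∑ j, μ j := Finset.single_le_sum (fun j _ => hnn j) (Finset.mem_univ i)


section Atoms
variable {A : Type*} [CommRing A] {n : ℕ} (e : Fin n → A) (hidem : ∀ i, e i * e i = e i)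


/-- The atom associated to a subset `S`. -/
noncomputable def atomE (S : Finset (Fin n)) : A :=
  (∏ i ∈ S, e i) * ∏ i ∈ Sᶜ, (1 - e i)

lemma atomE_sum : (∑ S : Finset (Fin n), atomE e S) = 1 := by
  classical
  have h1 : (1 : A) = ∏ i : Fin n, (e i + (1 - e i)) := by simp
  rw [Finset.prod_add, Finset.powerset_univ] at h1
  rw [h1]
  exact Finset.sum_congr rfl fun S _ => by rw [atomE, Finset.compl_eq_univ_sdiff]

include hidem

lemma atomE_absorb {i : Fin n} {S : Finset (Fin n)} (hiS : i ∈ S) :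
    e i * atomE e S = atomE e S := by
  rw [atomE, ← Finset.mul_prod_erase _ e hiS, ← mul_assoc, ← mul_assoc, hidem]

lemma atomE_annihilate {i : Fin n} {S : Finset (Fin n)} (hiS : i ∉ S) :
    e i * atomE e S = 0 := by
  classical
  have hiSc : i ∈ Sᶜ := Finset.mem_compl.mpr hiS
  rw [atomE, ← Finset.mul_prod_erase _ _ hiSc]
  have h0 : e i * (1 - e i) = 0 := by
    rw [mul_sub, mul_one, hidem, sub_self]
  calc e i * ((∏ j ∈ S, e j) * ((1 - e i) * ∏ j ∈ Sᶜ.erase i, (1 - e j)))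
      = (e i * (1 - e i)) * ((∏ j ∈ S, e j) * ∏ j ∈ Sᶜ.erase i, (1 - e j)) := by ring
  _ = 0 := by rw [h0, zero_mul]

lemma atomE_idem (S : Finset (Fin n)) : atomE e S * atomE e S = atomE e S := by
  have h1 : ∀ i, (1 - e i) * (1 - e i) = 1 - e i := by
    intro i
    have := hidem i; linear_combination this
  rw [atomE]
  calc ((∏ i ∈ S, e i) * ∏ i ∈ Sᶜ, (1 - e i)) * ((∏ i ∈ S, e i) * ∏ i ∈ Sᶜ, (1 - e i))
      = ((∏ i ∈ S, e i) * (∏ i ∈ S, e i)) * ((∏ i ∈ Sᶜ, (1 - e i)) * ∏ i ∈ Sᶜ, (1 - e i)) := by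
        ring
  _ = (∏ i ∈ S, (e i * e i)) * (∏ i ∈ Sᶜ, ((1 - e i) * (1 - e i))) := by
        rw [Finset.prod_mul_distrib, Finset.prod_mul_distrib]
  _ = (∏ i ∈ S, e i) * ∏ i ∈ Sᶜ, (1 - e i) := by
        rw [Finset.prod_congr rfl fun i _ => hidem i, Finset.prod_congr rfl fun i _ => h1 i]

lemma atomE_mul_filter (i j : Fin n) : e i * e j =
    ∑ S ∈ Finset.univ.filter (fun S => i ∈ S ∧ j ∈ S), atomE e S := by
  classical
  calc e i * e j = e i * e j * ∑ S : Finset (Fin n), atomE e S := by rw [atomE_sum, mul_one]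
  _ = ∑ S : Finset (Fin n), e i * e j * atomE e S := by rw [Finset.mul_sum]
  _ = ∑ S : Finset (Fin n), (if i ∈ S ∧ j ∈ S then atomE e S else 0) := by
      refine Finset.sum_congr rfl fun S _ => ?_
      by_cases hij : i ∈ S ∧ j ∈ S
      · rw [if_pos hij, mul_assoc, atomE_absorb e hidem hij.2, atomE_absorb e hidem hij.1]
      · rw [if_neg hij]
        rcases Decidable.not_and_iff_or_not.mp hij with h | h
        · rw [mul_assoc, mul_comm (e i), mul_assoc, mul_comm (atomE e S),
            atomE_annihilate e hidem h, mul_zero]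
        · rw [mul_assoc, atomE_annihilate e hidem h, mul_zero]
  _ = _ := (Finset.sum_filter _ _).symm

lemma atomE_mul_absorb {i j : Fin n} {S : Finset (Fin n)} (hi : i ∈ S) (hj : j ∈ S) :
    (e i * e j) * atomE e S = atomE e S := by
  rw [mul_assoc, atomE_absorb e hidem hj, atomE_absorb e hidem hi]

end Atoms

lemma exists_vectors {n k : ℕ} (P : Fin n → Matrix (Fin k) (Fin k) ℂ)
    (herm : ∀ i, (P i)ᴴ = P i) (idem : ∀ i, P i * P i = P i) (nz : ∀ i, P i ≠ 0)
    (comm : ∀ i j, P i * P j = P j * P i) :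
    ∃ x : Fin n → Fin k → ℝ, (∀ i, x i ≠ 0) ∧ (∀ i r, 0 ≤ x i r) ∧
      ∀ i j, (∑ r, x i r * x j r ≠ 0 ↔ P i * P j ≠ 0) := by
  classical
  have hcomm : ∀ x ∈ Set.range P, ∀ y ∈ Set.range P, x * y = y * x := by
    rintro _ ⟨i, rfl⟩ _ ⟨j, rfl⟩; exact comm i j
  letI inst : CommRing (Subring.closure (Set.range P)) := Subring.closureCommRingOfComm hcomm
  have hqmem : ∀ i, P i ∈ Subring.closure (Set.range P) :=
    fun i => Subring.subset_closure ⟨i, rfl⟩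
  set q : Fin n → Subring.closure (Set.range P) := fun i => ⟨P i, hqmem i⟩ with hqdef
  set χ : Subring.closure (Set.range P) →+* Matrix (Fin k) (Fin k) ℂ :=
    (Subring.closure (Set.range P)).subtype with hχ
  have hχP : ∀ i, χ (q i) = P i := fun i => rfl
  -- elements of the closure commute in the ambient ring
  have hc : ∀ a b : Subring.closure (Set.range P),
      (a : Matrix (Fin k) (Fin k) ℂ) * b = (b : Matrix (Fin k) (Fin k) ℂ) * a :=
    fun a b => congrArg Subtype.val (mul_comm a b)
  -- every element of the closure is self-adjoint
  have hstar : ∀ a : Subring.closure (Set.range P), (χ a)ᴴ = χ a := by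
    rintro ⟨a, ha⟩
    show aᴴ = a
    induction ha using Subring.closure_induction with
    | mem x hx => obtain ⟨i, rfl⟩ := hx; exact herm i
    | zero => simp
    | one => simp
    | add x y hx hy ihx ihy => rw [conjTranspose_add, ihx, ihy]
    | neg x hx ihx => rw [conjTranspose_neg, ihx]
    | mul x y hx hy ihx ihy =>
        rw [conjTranspose_mul, ihx, ihy]
        exact hc ⟨y, hy⟩ ⟨x, hx⟩
  have hidem' : ∀ i, q i * q i = q i := fun i => Subtype.ext (idem i)
  set Q : Finset (Fin n) → Matrix (Fin k) (Fin k) ℂ := fun S => χ (atomE q S) with hQdef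
  have hQ : ∀ S, Q S = χ (atomE q S) := fun S => rfl
  -- matrix-level facts about atoms
  have hQherm : ∀ S, (Q S)ᴴ = Q S := fun S => hstar (atomE q S)
  have hQidem : ∀ S, Q S * Q S = Q S := by
    intro S
    rw [hQ, ← _root_.map_mul, atomE_idem q hidem']
  have hQsum : (∑ S : Finset (Fin n), Q S) = 1 := by
    simp only [hQ]
    rw [← map_sum, atomE_sum q, _root_.map_one]
  have hPP : ∀ i j : Fin n, P i * P j =
      ∑ S ∈ Finset.univ.filter (fun S => i ∈ S ∧ j ∈ S), Q S := by
    intro i j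
    rw [← hχP i, ← hχP j, ← _root_.map_mul, atomE_mul_filter q hidem' i j, map_sum]
  have habsPP : ∀ (i j : Fin n) (S : Finset (Fin n)), i ∈ S → j ∈ S →
      (P i * P j) * Q S = Q S := by
    intro i j S hi hj
    rw [← hχP i, ← hχP j, hQ, ← _root_.map_mul, ← _root_.map_mul,
      atomE_mul_absorb q hidem' hi hj]
  -- characterization of nonvanishing
  have hchar : ∀ i j : Fin n, (P i * P j ≠ 0 ↔ ∃ S, Q S ≠ 0 ∧ i ∈ S ∧ j ∈ S) := by
    intro i j
    constructor
    · intro hne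
      by_contra hcon
      apply hne
      rw [hPP i j]
      apply Finset.sum_eq_zero
      intro S hS
      obtain ⟨hi, hj⟩ := (Finset.mem_filter.mp hS).2
      by_contra hQ0
      exact hcon ⟨S, hQ0, hi, hj⟩
    · rintro ⟨S, hQS, hi, hj⟩
      intro h0
      exact hQS (by rw [← habsPP i j S hi hj, h0, zero_mul])
  -- counting: the nonzero atoms number at most k
  set Acal : Finset (Finset (Fin n)) := Finset.univ.filter (fun S => Q S ≠ 0) with hAcal
  have htr : ∀ S, 0 ≤ (Q S).trace.re ∧ (Q S ≠ 0 → 1 ≤ (Q S).trace.re) :=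
    fun S => trace_re_of_proj (Q S) (hQherm S) (hQidem S)
  have hcard : (Acal.card : ℝ) ≤ k := by
    have h2 : ∑ S : Finset (Fin n), (Q S).trace.re = (k : ℝ) := by
      have h := congrArg Complex.re (congrArg Matrix.trace hQsum)
      rw [Matrix.trace_sum, Matrix.trace_one] at h
      rw [Complex.re_sum] at h
      simpa using h
    rw [← h2]
    calc (Acal.card : ℝ) = ∑ S ∈ Acal, (1:ℝ) := by simp
    _ ≤ ∑ S ∈ Acal, (Q S).trace.re := by
        apply Finset.sum_le_sum
        intro S hS
        exact (htr S).2 ((Finset.mem_filter.mp hS).2)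
    _ ≤ ∑ S : Finset (Fin n), (Q S).trace.re := by
        apply Finset.sum_le_sum_of_subset_of_nonneg (Finset.subset_univ _)
        intro S _ _
        exact (htr S).1
  have hcardk : Fintype.card {S // S ∈ Acal} ≤ Fintype.card (Fin k) := by
    rw [Fintype.card_coe, Fintype.card_fin]
    exact_mod_cast hcard
  obtain ⟨φ⟩ := Function.Embedding.nonempty_of_card_le hcardk
  -- define the vectors
  set x : Fin n → Fin k → ℝ := fun i r =>
    if ∃ S : {S // S ∈ Acal}, φ S = r ∧ i ∈ S.val then 1 else 0 with hxdef
  have hx01 : ∀ i r, x i r = 0 ∨ x i r = 1 := by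
    intro i r
    simp only [hxdef]
    by_cases h : ∃ S : {S // S ∈ Acal}, φ S = r ∧ i ∈ S.val
    · right; rw [if_pos h]
    · left; rw [if_neg h]
  have hxnn : ∀ i r, 0 ≤ x i r := by
    intro i r; rcases hx01 i r with h | h <;> rw [h] <;> norm_num
  have hx1 : ∀ (i : Fin n) (S : Finset (Fin n)) (hS : S ∈ Acal), i ∈ S →
      x i (φ ⟨S, hS⟩) = 1 := by
    intro i S hS hiS
    simp only [hxdef]
    exact if_pos ⟨⟨S, hS⟩, rfl, hiS⟩
  have hx1' : ∀ (i : Fin n) (r : Fin k), x i r ≠ 0 →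
      ∃ S : {S // S ∈ Acal}, φ S = r ∧ i ∈ S.val := by
    intro i r h
    simp only [hxdef] at h
    by_contra hcon
    exact h (if_neg hcon)
  refine ⟨x, ?_, hxnn, ?_⟩
  · intro i
    have hPi : P i * P i ≠ 0 := by rw [idem i]; exact nz i
    obtain ⟨S, hQS, hiS, -⟩ := (hchar i i).mp hPi
    have hS : S ∈ Acal := Finset.mem_filter.mpr ⟨Finset.mem_univ S, hQS⟩
    intro hx0
    have h1 := hx1 i S hS hiS
    rw [congrFun hx0 (φ ⟨S, hS⟩)] at h1
    exact one_ne_zero h1.symm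
  · intro i j
    rw [hchar i j]
    constructor
    · intro hsum
      obtain ⟨r, -, hr⟩ := Finset.exists_ne_zero_of_sum_ne_zero hsum
      have hxi : x i r ≠ 0 := fun h => hr (by rw [h, zero_mul])
      have hxj : x j r ≠ 0 := fun h => hr (by rw [h, mul_zero])
      obtain ⟨S, hSr, hiS⟩ := hx1' i r hxi
      obtain ⟨T, hTr, hjT⟩ := hx1' j r hxj
      have hST : S = T := φ.injective (hSr.trans hTr.symm)
      refine ⟨S.val, (Finset.mem_filter.mp S.property).2, hiS, ?_⟩
      rw [hST]; exact hjT
    · rintro ⟨S, hQS, hiS, hjS⟩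
      have hS : S ∈ Acal := Finset.mem_filter.mpr ⟨Finset.mem_univ S, hQS⟩
      have hterm : x i (φ ⟨S, hS⟩) * x j (φ ⟨S, hS⟩) = 1 := by
        rw [hx1 i S hS hiS, hx1 j S hS hjS, mul_one]
      intro h0
      have hnn : ∀ r, 0 ≤ x i r * x j r := fun r => mul_nonneg (hxnn i r) (hxnn j r)
      have hz := (Finset.sum_eq_zero_iff_of_nonneg (fun r _ => hnn r)).mp h0 (φ ⟨S, hS⟩)
        (Finset.mem_univ _)
      rw [hterm] at hz
      exact one_ne_zero hz

lemma exists_proj_of_vectors {n k : ℕ} (x : Fin n → Fin k → ℝ)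
    (hnz : ∀ i, x i ≠ 0) (hnn : ∀ i r, 0 ≤ x i r) :
    ∃ P : Fin n → Matrix (Fin k) (Fin k) ℂ,
      (∀ i, (P i)ᴴ = P i) ∧ (∀ i, P i * P i = P i) ∧ (∀ i, P i ≠ 0) ∧
      (∀ i j, P i * P j = P j * P i) ∧
      ∀ i j, (P i * P j ≠ 0 ↔ ∑ r, x i r * x j r ≠ 0) := by
  classical
  refine ⟨fun i => diagonal (fun r => if x i r = 0 then (0:ℂ) else 1), ?_, ?_, ?_, ?_, ?_⟩
  · intro i
    rw [diagonal_conjTranspose]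
    refine congrArg diagonal ?_
    funext r
    by_cases h : x i r = 0 <;> simp [h]
  · intro i
    rw [diagonal_mul_diagonal]
    refine congrArg diagonal ?_
    funext r
    by_cases h : x i r = 0 <;> simp [h]
  · intro i h0
    obtain ⟨r, hr⟩ := Function.ne_iff.mp (hnz i)
    have hr' : x i r ≠ 0 := by simpa using hr
    have h1 : diagonal (fun r => if x i r = 0 then (0:ℂ) else 1) r r
        = if x i r = 0 then (0:ℂ) else 1 := diagonal_apply_eq _ r
    have h0' : diagonal (fun r => if x i r = 0 then (0:ℂ) else 1) = 0 := h0
    rw [h0', if_neg hr'] at h1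
    simp at h1
  · intro i j
    rw [diagonal_mul_diagonal, diagonal_mul_diagonal]
    ext r t
    by_cases hrt : r = t
    · subst hrt
      rw [Matrix.diagonal_apply_eq, Matrix.diagonal_apply_eq]
      ring
    · rw [Matrix.diagonal_apply_ne _ hrt, Matrix.diagonal_apply_ne _ hrt]
  · intro i j
    rw [diagonal_mul_diagonal]
    have h1 : diagonal (fun r => (if x i r = 0 then (0:ℂ) else 1) *
        (if x j r = 0 then (0:ℂ) else 1)) ≠ 0 ↔
        (fun r => (if x i r = 0 then (0:ℂ) else 1) * (if x j r = 0 then (0:ℂ) else 1))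
          ≠ (fun _ => (0:ℂ)) := by
      constructor
      · intro h h'
        exact h (by rw [h']; exact Matrix.diagonal_zero)
      · intro h h'
        refine h (diagonal_injective ?_)
        rw [h', Matrix.diagonal_zero]
    rw [h1, Function.ne_iff]
    have h2 : ∀ r, ((if x i r = 0 then (0:ℂ) else 1) * (if x j r = 0 then (0:ℂ) else 1) ≠ 0)
        ↔ x i r * x j r ≠ 0 := by
      intro r
      by_cases hi : x i r = 0 <;> by_cases hj : x j r = 0 <;> simp [hi, hj]
    constructor
    · rintro ⟨r, hr⟩
      intro h0
      have hterm : ∀ r, 0 ≤ x i r * x j r := fun r => mul_nonneg (hnn i r) (hnn j r)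
      have hz := (Finset.sum_eq_zero_iff_of_nonneg (fun r _ => hterm r)).mp h0 r
        (Finset.mem_univ _)
      exact ((h2 r).mp hr) hz
    · intro hsum
      obtain ⟨r, -, hr⟩ := Finset.exists_ne_zero_of_sum_ne_zero hsum
      exact ⟨r, (h2 r).mpr hr⟩


/-- `cc(G)` equals the least `k` admitting pairwise commuting nonzero
orthogonal projections in `M_k` whose non-orthogonality graph is `G`. -/
theorem cc_eq_commuting_projections (n : ℕ) (G : SimpleGraph (Fin n)) :
    ccG G = sInf {k : ℕ | ∃ P : Fin n → Matrix (Fin k) (Fin k) ℂ,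
      (∀ i, (P i)ᴴ = P i) ∧ (∀ i, P i * P i = P i) ∧ (∀ i, P i ≠ 0) ∧
      (∀ i j, P i * P j = P j * P i) ∧
      ∀ i j, i ≠ j → (G.Adj i j ↔ P i * P j ≠ 0)} := by
  rw [ccG]
  congr 1
  ext k
  simp only [Set.mem_setOf_eq]
  constructor
  · rintro ⟨x, hnz, hnn, hadj⟩
    obtain ⟨P, h1, h2, h3, h4, h5⟩ := exists_proj_of_vectors x hnz hnn
    refine ⟨P, h1, h2, h3, h4, fun i j hij => ?_⟩
    rw [hadj i j hij, ← h5 i j]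
  · rintro ⟨P, h1, h2, h3, h4, hadj⟩
    obtain ⟨x, hnz, hnn, h5⟩ := exists_vectors P h1 h2 h3 h4
    refine ⟨x, hnz, hnn, fun i j hij => ?_⟩
    rw [hadj i j hij, ← h5 i j]
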